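/- (φ is contiguous at reducible positions.) For every i ∈ [1, n) such that ISA[i] ≥ 1 and BWT[ISA[i]] = BWT[ISA[i]−1], it holds that φ(i) = φ(i−1) + 1. Consequently, the breakpoint set of φ, namely {0} ∪ {i ∈ [1, n) : φ(i) ≠ φ(i−1) + 1}, is contained in {SA[k] : k = 0 or BWT[k] ≠ BWT[k−1]}; in particular φ has at most r input intervals, where r is the number of maximal equal-character runs of BWT. -/

import Mathlib

/-- The suffix `T[i..n−1]` of a text of length `n`, as a list. -/
def sfx {α : Type*} (T : ℕ → α) (n i : ℕ) : List α :=
  (List.range (n - i)).map (fun k => T (i + k))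

section Aux
variable {α : Type*} [LinearOrder α]

private lemma list_lt_iff {l l' : List α} : l < l' ↔ List.Lex (· < ·) l l' := Iff.rfl

private lemma cons_lt_cons' (a : α) {l l' : List α} (h : l < l') : a :: l < a :: l' :=
  list_lt_iff.mpr (List.Lex.cons (list_lt_iff.mp h))

private lemma cons_lt_inv {a b : α} {l l' : List α} (h : a :: l < b :: l') :
    a < b ∨ (a = b ∧ l < l') := by
  rw [list_lt_iff] at h
  cases h with
  | cons h => exact Or.inr ⟨rfl, list_lt_iff.mpr h⟩
  | rel h => exact Or.inl h

private lemma not_list_lt_nil (l : List α) : ¬ l < ([] : List α) := by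
  rw [list_lt_iff]; intro h; cases h

set_option linter.unusedSectionVars false in
private lemma sfx_cons (T : ℕ → α) {n i : ℕ} (h : i < n) :
    sfx T n i = T i :: sfx T n (i + 1) := by
  unfold sfx
  have h1 : n - i = (n - (i + 1)) + 1 := by omega
  rw [h1, List.range_succ_eq_map, List.map_cons, List.map_map]
  refine congrArg₂ _ (by simp) ?_
  apply List.map_congr_left
  intro k _
  simp only [Function.comp]
  congr 1
  omega

set_option linter.unusedSectionVars false in
private lemma sfx_nil (T : ℕ → α) (n : ℕ) : sfx T n n = [] := by
  simp [sfx]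
end Aux

private lemma mod_helper {k n : ℕ} (h1 : 1 ≤ k) (h2 : k < n) :
    (k + n - 1) % n = k - 1 := by
  have h : k + n - 1 = (k - 1) + n := by omega
  rw [h, Nat.add_mod_right, Nat.mod_eq_of_lt (by omega)]

/-- `φ` is contiguous at reducible positions: if `ISA[i] ≥ 1`
and `BWT[ISA[i]] = BWT[ISA[i]−1]`, then `φ(i) = φ(i−1) + 1`. Consequently the
breakpoint set of `φ` is contained in `{SA[k] : k = 0 or BWT[k] ≠ BWT[k−1]}`;
in particular `φ` has at most `r` input intervals, where `r` is the number of
maximal equal-character runs of `BWT`. -/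
theorem phi_contiguous_at_reducible
    {α : Type*} [LinearOrder α] (n : ℕ) (hn : 1 ≤ n) (T : ℕ → α)
    (hsent : ∀ i, i < n - 1 → T (n - 1) < T i)
    (SA ISA : ℕ → ℕ)
    (hSA : ∀ i, i < n → SA i < n)
    (hmono : ∀ i j, i < j → j < n → sfx T n (SA i) < sfx T n (SA j))
    (hISA : ∀ i, i < n → ISA i < n ∧ ISA (SA i) = i ∧ SA (ISA i) = i)
    (BWT : ℕ → α)
    (hBWT : ∀ k, k < n → BWT k = T ((SA k + n - 1) % n))
    (φ : ℕ → ℕ)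
    (hφ : ∀ k, k < n → φ (SA k) = SA ((k + n - 1) % n)) :
    (∀ i, 1 ≤ i → i < n → 1 ≤ ISA i → BWT (ISA i) = BWT (ISA i - 1) →
      φ i = φ (i - 1) + 1) ∧
    ((Finset.range n).filter (fun i => i = 0 ∨ φ i ≠ φ (i - 1) + 1)) ⊆
      ((Finset.range n).filter (fun k => k = 0 ∨ BWT k ≠ BWT (k - 1))).image SA ∧
    ((Finset.range n).filter (fun i => i = 0 ∨ φ i ≠ φ (i - 1) + 1)).card ≤
      ((Finset.range n).filter (fun k => k = 0 ∨ BWT k ≠ BWT (k - 1))).card := by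
  -- from suffix order to index order
  have hidx : ∀ a b, a < n → b < n → sfx T n (SA a) < sfx T n (SA b) → a < b := by
    intro a b ha hb h
    rcases lt_trichotomy a b with h1 | h1 | h1
    · exact h1
    · subst h1; exact absurd h (lt_irrefl _)
    · exact absurd (hmono b a h1 ha) (lt_asymm h)
  -- main claim
  have key : ∀ i, 1 ≤ i → i < n → 1 ≤ ISA i → BWT (ISA i) = BWT (ISA i - 1) →
      φ i = φ (i - 1) + 1 := by
    intro i hi1 hin hk1 hbwt
    obtain ⟨hkn, -, hki⟩ := hISA i hin
    have hkm1 : ISA i - 1 < n := by omega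
    have hjn : SA (ISA i - 1) < n := hSA _ hkm1
    have hb1 : BWT (ISA i) = T (i - 1) := by
      rw [hBWT _ hkn, hki, mod_helper hi1 hin]
    -- j ≥ 1
    have hj1 : 1 ≤ SA (ISA i - 1) := by
      by_contra h
      have hj0 : SA (ISA i - 1) = 0 := by omega
      have hb2 : BWT (ISA i - 1) = T (n - 1) := by
        rw [hBWT _ hkm1, hj0]
        congr 1
        have h0 : 0 + n - 1 = n - 1 := by omega
        rw [h0, Nat.mod_eq_of_lt (by omega)]
      have hs := hsent (i - 1) (by omega)
      rw [← hb1, hbwt, hb2] at hs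
      exact lt_irrefl _ hs
    have hb2 : BWT (ISA i - 1) = T (SA (ISA i - 1) - 1) := by
      rw [hBWT _ hkm1, mod_helper hj1 hjn]
    have hc : T (i - 1) = T (SA (ISA i - 1) - 1) := by rw [← hb1, hbwt, hb2]
    -- suffix comparison at positions i, j
    have hsuf : sfx T n (SA (ISA i - 1)) < sfx T n i := by
      have := hmono (ISA i - 1) (ISA i) (by omega) hkn
      rwa [hki] at this
    -- suffix comparison at positions i-1, j-1
    obtain ⟨han, -, hSAa⟩ := hISA (SA (ISA i - 1) - 1) (by omega)
    obtain ⟨hbn, -, hSAb⟩ := hISA (i - 1) (by omega)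
    have hlt : sfx T n (SA (ISA i - 1) - 1) < sfx T n (i - 1) := by
      rw [sfx_cons T (show SA (ISA i - 1) - 1 < n by omega),
        sfx_cons T (show i - 1 < n by omega),
        Nat.sub_add_cancel hj1, Nat.sub_add_cancel hi1, ← hc]
      exact cons_lt_cons' _ hsuf
    have hab : ISA (SA (ISA i - 1) - 1) < ISA (i - 1) :=
      hidx _ _ han hbn (by rw [hSAa, hSAb]; exact hlt)
    -- adjacency
    have hadj : ISA (i - 1) = ISA (SA (ISA i - 1) - 1) + 1 := by
      by_contra hne
      have hm : ISA (SA (ISA i - 1) - 1) + 1 < ISA (i - 1) := by omega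
      have hmn : ISA (SA (ISA i - 1) - 1) + 1 < n := by omega
      have hpn : SA (ISA (SA (ISA i - 1) - 1) + 1) < n := hSA _ hmn
      have h1 : sfx T n (SA (ISA i - 1) - 1) < sfx T n (SA (ISA (SA (ISA i - 1) - 1) + 1)) := by
        have := hmono (ISA (SA (ISA i - 1) - 1)) (ISA (SA (ISA i - 1) - 1) + 1) (by omega) hmn
        rwa [hSAa] at this
      have h2 : sfx T n (SA (ISA (SA (ISA i - 1) - 1) + 1)) < sfx T n (i - 1) := by
        have := hmono (ISA (SA (ISA i - 1) - 1) + 1) (ISA (i - 1)) hm hbn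
        rwa [hSAb] at this
      rw [sfx_cons T (show SA (ISA i - 1) - 1 < n by omega),
        Nat.sub_add_cancel hj1, ← hc, sfx_cons T hpn] at h1
      rw [sfx_cons T (show i - 1 < n by omega), Nat.sub_add_cancel hi1, sfx_cons T hpn] at h2
      rcases cons_lt_inv h1 with hcp | ⟨hcp, h1'⟩
      · rcases cons_lt_inv h2 with hpc | ⟨hpc, -⟩
        · exact lt_irrefl _ (hcp.trans hpc)
        · rw [hpc] at hcp; exact lt_irrefl _ hcp
      · rcases cons_lt_inv h2 with hpc | ⟨-, h2'⟩
        · rw [hcp] at hpc; exact lt_irrefl _ hpc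
        · have hppn : SA (ISA (SA (ISA i - 1) - 1) + 1) + 1 < n := by
            by_contra h
            have he : SA (ISA (SA (ISA i - 1) - 1) + 1) + 1 = n := by omega
            rw [he, sfx_nil] at h1'
            exact not_list_lt_nil _ h1'
          obtain ⟨hqn, -, hSAq⟩ := hISA (SA (ISA (SA (ISA i - 1) - 1) + 1) + 1) hppn
          have ha1 : ISA i - 1 < ISA (SA (ISA (SA (ISA i - 1) - 1) + 1) + 1) :=
            hidx _ _ hkm1 hqn (by rw [hSAq]; exact h1')
          have ha2 : ISA (SA (ISA (SA (ISA i - 1) - 1) + 1) + 1) < ISA i :=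
            hidx _ _ hqn hkn (by rw [hSAq, hki]; exact h2')
          omega
    -- compute φ values
    have hφ1 : φ i = SA (ISA i - 1) := by
      conv_lhs => rw [← hki]
      rw [hφ _ hkn, mod_helper hk1 hkn]
    have hφ2 : φ (i - 1) = SA (ISA i - 1) - 1 := by
      conv_lhs => rw [← hSAb]
      rw [hφ _ hbn, mod_helper (by omega) hbn, hadj, Nat.add_sub_cancel, hSAa]
    omega
  refine ⟨key, ?_, ?_⟩
  · -- subset
    intro i hi
    simp only [Finset.mem_filter, Finset.mem_range] at hi
    obtain ⟨hin, hcond⟩ := hi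
    obtain ⟨hkn, -, hSAk⟩ := hISA i hin
    rw [Finset.mem_image]
    refine ⟨ISA i, ?_, hSAk⟩
    simp only [Finset.mem_filter, Finset.mem_range]
    refine ⟨hkn, ?_⟩
    by_contra h
    push_neg at h
    obtain ⟨hk0, hbeq⟩ := h
    by_cases hi0 : i = 0
    · subst hi0
      have hk1 : 1 ≤ ISA 0 := by omega
      have hb1 : BWT (ISA 0) = T (n - 1) := by
        rw [hBWT _ hkn, hSAk]
        congr 1
        have h0 : 0 + n - 1 = n - 1 := by omega
        rw [h0, Nat.mod_eq_of_lt (by omega)]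
      have hkm1 : ISA 0 - 1 < n := by omega
      have hjn : SA (ISA 0 - 1) < n := hSA _ hkm1
      have hjne : SA (ISA 0 - 1) ≠ 0 := by
        intro h0
        obtain ⟨-, hISAj, -⟩ := hISA (ISA 0 - 1) hkm1
        rw [h0] at hISAj
        omega
      have hb2 : BWT (ISA 0 - 1) = T (SA (ISA 0 - 1) - 1) := by
        rw [hBWT _ hkm1, mod_helper (by omega) hjn]
      have hs := hsent (SA (ISA 0 - 1) - 1) (by omega)
      rw [← hb2, ← hbeq, hb1] at hs
      exact lt_irrefl _ hs
    · have hφne := hcond.resolve_left hi0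
      exact hφne (key i (by omega) hin (by omega) hbeq)
  · -- cardinality
    calc ((Finset.range n).filter (fun i => i = 0 ∨ φ i ≠ φ (i - 1) + 1)).card
        ≤ (((Finset.range n).filter (fun k => k = 0 ∨ BWT k ≠ BWT (k - 1))).image SA).card := by
          apply Finset.card_le_card
          intro i hi
          simp only [Finset.mem_filter, Finset.mem_range] at hi
          obtain ⟨hin, hcond⟩ := hi
          obtain ⟨hkn, -, hSAk⟩ := hISA i hin
          rw [Finset.mem_image]
          refine ⟨ISA i, ?_, hSAk⟩
          simp only [Finset.mem_filter, Finset.mem_range]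
          refine ⟨hkn, ?_⟩
          by_contra h
          push_neg at h
          obtain ⟨hk0, hbeq⟩ := h
          by_cases hi0 : i = 0
          · subst hi0
            have hk1 : 1 ≤ ISA 0 := by omega
            have hb1 : BWT (ISA 0) = T (n - 1) := by
              rw [hBWT _ hkn, hSAk]
              congr 1
              have h0 : 0 + n - 1 = n - 1 := by omega
              rw [h0, Nat.mod_eq_of_lt (by omega)]
            have hkm1 : ISA 0 - 1 < n := by omega
            have hjn : SA (ISA 0 - 1) < n := hSA _ hkm1
            have hjne : SA (ISA 0 - 1) ≠ 0 := by
              intro h0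
              obtain ⟨-, hISAj, -⟩ := hISA (ISA 0 - 1) hkm1
              rw [h0] at hISAj
              omega
            have hb2 : BWT (ISA 0 - 1) = T (SA (ISA 0 - 1) - 1) := by
              rw [hBWT _ hkm1, mod_helper (by omega) hjn]
            have hs := hsent (SA (ISA 0 - 1) - 1) (by omega)
            rw [← hb2, ← hbeq, hb1] at hs
            exact lt_irrefl _ hs
          · have hφne := hcond.resolve_left hi0
            exact hφne (key i (by omega) hin (by omega) hbeq)
      _ ≤ ((Finset.range n).filter (fun k => k = 0 ∨ BWT k ≠ BWT (k - 1))).card :=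
          Finset.card_image_le
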